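/- Let $(X_i, Y_i)$, $i=1,\ldots,n+1$, be i.i.d. with $X_{n+1}$ the test point, let $w:\mathbb{R}^p\to[0,\infty)$ be a fixed weight function, and suppose the test pair $(\tilde X,\tilde Y)$ is drawn (independently of $(X_1,Y_1),\ldots,(X_n,Y_n)$) from the tilted distribution $d\tilde{\mathcal{P}}(x,y)\propto w(x)\, d\mathcal{P}_{XY}(x,y)$. Let $V$ be a fixed score function, $V_i=V(X_i,Y_i)$, and define $p_i = \frac{w(X_i)}{\sum_{j=1}^n w(X_j)+w(\tilde X)}$ for $i\le n$ and $p_{n+1}=\frac{w(\tilde X)}{\sum_{j=1}^n w(X_j)+w(\tilde X)}$. Then $\mathbb{P}\big(V(\tilde X,\tilde Y) \le Q(\alpha; \textstyle\sum_{i=1}^n p_i\delta_{V_i} + p_{n+1}\delta_\infty)\big) \ge \alpha.$ -/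

import Mathlib

open Finset MeasureTheory ProbabilityTheory
open scoped ENNReal

noncomputable def equantile {m : ℕ} (w : Fin m → ℝ) (V : Fin m → EReal) (α : ℝ) : EReal :=
  sInf {t : EReal | α ≤ ∑ i, if V i ≤ t then w i else 0}

lemma equantile_mem {m : ℕ} {q : Fin m → ℝ} {V : Fin m → EReal} {α : ℝ}
    (hq : ∀ i, 0 ≤ q i) (hα : α ≤ ∑ i, q i) :
    α ≤ ∑ i, if V i ≤ equantile q V α then q i else 0 := by
  set F : EReal → ℝ := fun t => ∑ i, if V i ≤ t then q i else 0 with hF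
  set S : Set EReal := {t | α ≤ F t} with hS
  have htop : (⊤ : EReal) ∈ S := by
    simp only [hS, Set.mem_setOf_eq, hF]
    calc α ≤ ∑ i, q i := hα
    _ = ∑ i, if V i ≤ (⊤ : EReal) then q i else 0 := by
        refine Finset.sum_congr rfl fun i _ => ?_
        rw [if_pos le_top]
  have hmono : ∀ {t t' : EReal}, (∀ i, V i ≤ t' → V i ≤ t) → F t' ≤ F t := by
    intro t t' h
    refine Finset.sum_le_sum fun i _ => ?_
    by_cases hi : V i ≤ t'
    · rw [if_pos hi, if_pos (h i hi)]
    · rw [if_neg hi]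
      split <;> [exact hq i; exact le_refl 0]
  have hQ : equantile q V α = sInf S := rfl
  show α ≤ F (sInf S)
  by_cases hB : ∀ i, V i ≤ sInf S
  · have : F (sInf S) = ∑ i, q i := Finset.sum_congr rfl fun i _ => if_pos (hB i)
    rw [this]; exact hα
  · push_neg at hB
    set B : Finset (Fin m) := Finset.univ.filter (fun i => sInf S < V i) with hBdef
    have hBne : B.Nonempty := by
      obtain ⟨i, hi⟩ := hB
      exact ⟨i, by simp [hBdef, hi]⟩
    set mV : EReal := (B.image V).min' (hBne.image V) with hmV
    have hsmV : sInf S < mV := by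
      obtain ⟨t, ht, hteq⟩ := Finset.mem_image.1 ((B.image V).min'_mem (hBne.image V))
      rw [hmV, ← hteq]
      exact (Finset.mem_filter.1 ht).2
    obtain ⟨t, htS, htlt⟩ := sInf_lt_iff.1 hsmV
    refine le_trans htS (hmono fun i hi => ?_)
    by_contra hcon
    have hiB : i ∈ B := by simp [hBdef, lt_of_not_ge hcon]
    have : mV ≤ V i := (B.image V).min'_le _ (Finset.mem_image_of_mem V hiB)
    exact absurd (lt_of_le_of_lt (le_trans this hi) htlt) (lt_irrefl _)

lemma equantile_mono {m : ℕ} {q : Fin m → ℝ} {V V' : Fin m → EReal} {α : ℝ}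
    (hq : ∀ i, 0 ≤ q i) (hVV' : ∀ i, V i ≤ V' i) :
    equantile q V α ≤ equantile q V' α := by
  refine sInf_le_sInf fun t ht => ?_
  simp only [Set.mem_setOf_eq] at ht ⊢
  refine le_trans ht (Finset.sum_le_sum fun i _ => ?_)
  by_cases hi : V' i ≤ t
  · rw [if_pos hi, if_pos ((hVV' i).trans hi)]
  · rw [if_neg hi]
    split <;> [exact hq i; exact le_refl 0]

lemma equantile_comp_perm {m : ℕ} (q : Fin m → ℝ) (V : Fin m → EReal) (α : ℝ)
    (σ : Equiv.Perm (Fin m)) :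
    equantile (fun i => q (σ i)) (fun i => V (σ i)) α = equantile q V α := by
  unfold equantile
  congr 1
  ext t
  simp only [Set.mem_setOf_eq]
  rw [Equiv.sum_comp σ (fun i => if V i ≤ t then q i else 0)]

lemma equantile_eq_iInf {m : ℕ} (q : Fin m → ℝ) (V : Fin m → EReal) (α : ℝ)
    (hq : ∀ i, 0 ≤ q i) :
    equantile q V α = ⨅ o : Option (Fin m),
      (if α ≤ ∑ i, (if V i ≤ o.elim ⊥ V then q i else 0) then o.elim ⊥ V else ⊤) := by
  set F : EReal → ℝ := fun t => ∑ i, if V i ≤ t then q i else 0 with hF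
  apply le_antisymm
  · refine le_iInf fun o => ?_
    by_cases h : α ≤ F (o.elim ⊥ V)
    · rw [if_pos h]; exact sInf_le h
    · rw [if_neg h]; exact le_top
  · refine le_sInf fun u hu => ?_
    simp only [Set.mem_setOf_eq] at hu
    by_cases hex : ∃ i, V i ≤ u
    · set B : Finset (Fin m) := Finset.univ.filter (fun i => V i ≤ u) with hBdef
      have hBne : B.Nonempty := by
        obtain ⟨i, hi⟩ := hex; exact ⟨i, by simp [hBdef, hi]⟩
      obtain ⟨j, hjB, hjt⟩ := Finset.mem_image.1 ((B.image V).max'_mem (hBne.image V))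
      have hju : V j ≤ u := (Finset.mem_filter.1 hjB).2
      have hsub : ∀ i, V i ≤ u → V i ≤ V j := by
        intro i hi
        rw [hjt]
        exact (B.image V).le_max' _ (Finset.mem_image_of_mem V (by simp [hBdef, hi]))
      have hFj : α ≤ F (V j) := by
        refine le_trans hu (Finset.sum_le_sum fun i _ => ?_)
        by_cases hi : V i ≤ u
        · rw [if_pos hi, if_pos (hsub i hi)]
        · rw [if_neg hi]; split <;> [exact hq i; exact le_refl 0]
      calc (⨅ o : Option (Fin m), (if α ≤ F (o.elim ⊥ V) then o.elim ⊥ V else ⊤))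
          ≤ (if α ≤ F ((Option.some j).elim ⊥ V) then (Option.some j).elim ⊥ V else ⊤) :=
            iInf_le _ _
        _ = V j := by simp only [Option.elim_some]; exact if_pos hFj
        _ ≤ u := hju
    · push_neg at hex
      have hFu : F u = 0 := by
        refine Finset.sum_eq_zero fun i _ => if_neg (by exact fun h => absurd h (not_le.2 (hex i)))
      have hFbot : α ≤ F (⊥ : EReal) := by
        have : F (⊥ : EReal) = 0 := by
          refine Finset.sum_eq_zero fun i _ => if_neg ?_
          intro h
          exact absurd (le_trans h bot_le) (not_le.2 (hex i))
        rw [this, ← hFu]; exact hu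
      calc (⨅ o : Option (Fin m), (if α ≤ F (o.elim ⊥ V) then o.elim ⊥ V else ⊤))
          ≤ (if α ≤ F ((Option.none).elim ⊥ V) then (Option.none (α := Fin m)).elim ⊥ V else ⊤) :=
            iInf_le _ _
        _ = ⊥ := by simp only [Option.elim_none]; exact if_pos hFbot
        _ ≤ u := bot_le

lemma measurable_equantile {m : ℕ} {X : Type*} [MeasurableSpace X]
    {qf : Fin m → X → ℝ} {Vf : Fin m → X → EReal} (α : ℝ)
    (hqf : ∀ i, Measurable (qf i)) (hq0 : ∀ i x, 0 ≤ qf i x) (hVf : ∀ i, Measurable (Vf i)) :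
    Measurable (fun x => equantile (fun i => qf i x) (fun i => Vf i x) α) := by
  have heq : (fun x => equantile (fun i => qf i x) (fun i => Vf i x) α)
      = fun x => ⨅ o : Option (Fin m),
        (if α ≤ ∑ i, (if Vf i x ≤ o.elim ⊥ (fun i => Vf i x) then qf i x else 0)
          then o.elim ⊥ (fun i => Vf i x) else ⊤) := by
    funext x
    exact equantile_eq_iInf _ _ α (fun i => hq0 i x)
  rw [heq]
  refine Measurable.iInf fun o => ?_
  have hg : Measurable (fun x => o.elim (⊥ : EReal) (fun i => Vf i x)) := by
    cases o with
    | none => exact measurable_const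
    | some i => exact hVf i
  have hsum : Measurable (fun x =>
      ∑ i, (if Vf i x ≤ o.elim ⊥ (fun i => Vf i x) then qf i x else 0)) := by
    refine Finset.measurable_sum _ fun i _ => ?_
    exact Measurable.ite (measurableSet_le (hVf i) hg) (hqf i) measurable_const
  exact Measurable.ite (measurableSet_le measurable_const hsum) hg measurable_const

lemma pi_tilted_apply {E : Type*} [MeasurableSpace E] {n : ℕ} (P : Measure E)
    [IsProbabilityMeasure P] (Pt : Measure E) [IsProbabilityMeasure Pt]
    (ρ : E → ℝ≥0∞) (hρ : Measurable ρ) (c : ℝ≥0∞)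
    (hPt : Pt = c⁻¹ • P.withDensity ρ) {B : Set (Fin (n + 1) → E)} (hB : MeasurableSet B) :
    Measure.pi (fun i => if i = Fin.last n then Pt else P) B
      = c⁻¹ * ∫⁻ x in B, ρ (x (Fin.last n)) ∂(Measure.pi fun _ : Fin (n + 1) => P) := by
  classical
  set νf : Fin (n + 1) → Measure E := fun i => if i = Fin.last n then Pt else P with hνf
  set π' : Measure (Fin n → E) := Measure.pi fun _ : Fin n => P with hπ'
  set e := MeasurableEquiv.piFinSuccAbove (fun _ : Fin (n + 1) => E) (Fin.last n) with he
  haveI hsf : ∀ i, SigmaFinite (νf i) := fun i => by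
    rw [hνf]; dsimp only; split <;> infer_instance
  have h1 : MeasurePreserving e (Measure.pi νf) (Pt.prod π') := by
    have := measurePreserving_piFinSuccAbove νf (Fin.last n)
    have hrest : (fun j : Fin n => νf ((Fin.last n).succAbove j)) = fun _ => P := by
      funext j
      simp only [hνf, Fin.succAbove_last, if_neg (Fin.castSucc_lt_last j).ne]
    have hlast : νf (Fin.last n) = Pt := if_pos rfl
    rw [hrest, hlast] at this
    exact this
  have h2 : MeasurePreserving e (Measure.pi fun _ : Fin (n + 1) => P) (P.prod π') := by
    have := measurePreserving_piFinSuccAbove (fun _ : Fin (n + 1) => P) (Fin.last n)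
    exact this
  set C : Set (E × (Fin n → E)) := e.symm ⁻¹' B with hC
  have hCm : MeasurableSet C := e.symm.measurable hB
  have hpre : e ⁻¹' C = B := by
    rw [hC, ← Set.preimage_comp]
    simp
  have hL : Measure.pi νf B = (Pt.prod π') C := by
    rw [← hpre, ← h1.map_eq, Measure.map_apply e.measurable hCm]
  have hslice : ∀ a : E, MeasurableSet (Prod.mk a ⁻¹' C) := fun a => measurable_prodMk_left hCm
  have hPtC : (Pt.prod π') C = c⁻¹ * ∫⁻ a, ρ a * π' (Prod.mk a ⁻¹' C) ∂P := by
    rw [Measure.prod_apply hCm, hPt]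
    rw [lintegral_smul_measure]
    congr 1
    rw [lintegral_withDensity_eq_lintegral_mul _ hρ (measurable_measure_prodMk_left hCm)]
    rfl
  have hR : ∫⁻ x in B, ρ (x (Fin.last n)) ∂(Measure.pi fun _ : Fin (n + 1) => P)
      = ∫⁻ a, ρ a * π' (Prod.mk a ⁻¹' C) ∂P := by
    have hfm : Measurable (fun y : E × (Fin n → E) => C.indicator (fun y => ρ y.1) y) :=
      (hρ.comp measurable_fst).indicator hCm
    have key : ∫⁻ y in C, ρ y.1 ∂(P.prod π') = ∫⁻ a, ρ a * π' (Prod.mk a ⁻¹' C) ∂P := by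
      rw [← lintegral_indicator hCm]
      rw [lintegral_prod _ hfm.aemeasurable]
      congr 1
      funext a
      have : ∀ v : Fin n → E, C.indicator (fun y : E × (Fin n → E) => ρ y.1) (a, v)
          = (Prod.mk a ⁻¹' C).indicator (fun _ => ρ a) v := by
        intro v
        by_cases hv : (a, v) ∈ C
        · rw [Set.indicator_of_mem hv, Set.indicator_of_mem (show v ∈ Prod.mk a ⁻¹' C from hv)]
        · rw [Set.indicator_of_notMem hv,
            Set.indicator_of_notMem (show v ∉ Prod.mk a ⁻¹' C from hv)]
      simp_rw [this]
      rw [lintegral_indicator_const (hslice a)]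
    rw [← key, ← lintegral_indicator hB, ← lintegral_indicator hCm]
    rw [← h2.lintegral_comp hfm]
    congr 1
    funext x
    have hx1 : (e x).1 = x (Fin.last n) := rfl
    have hmem : e x ∈ C ↔ x ∈ B := by
      rw [hC, Set.mem_preimage]
      simp
    by_cases hx : x ∈ B
    · rw [Set.indicator_of_mem (hmem.2 hx), Set.indicator_of_mem hx, hx1]
    · rw [Set.indicator_of_notMem (fun h => hx (hmem.1 h)), Set.indicator_of_notMem hx]
  rw [hL, hPtC, hR]

lemma lintegral_pi_comp_perm {E : Type*} [MeasurableSpace E] {m : ℕ} (P : Measure E)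
    [IsProbabilityMeasure P] (σ : Equiv.Perm (Fin m)) {F : (Fin m → E) → ℝ≥0∞}
    (hF : Measurable F) :
    ∫⁻ x, F (x ∘ σ) ∂(Measure.pi fun _ : Fin m => P)
      = ∫⁻ x, F x ∂(Measure.pi fun _ : Fin m => P) := by
  set e := MeasurableEquiv.piCongrLeft (fun _ : Fin m => E) σ with he
  have h : MeasurePreserving e.symm
      (Measure.pi fun _ : Fin m => P) (Measure.pi fun _ : Fin m => P) :=
    (measurePreserving_piCongrLeft (fun _ : Fin m => P) σ).symm e
  rw [← h.lintegral_comp hF]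
  refine lintegral_congr fun x => ?_
  congr 1

/-- Weighted conformal prediction under covariate shift (Proposition B.1, Tibshirani et al.):
with `n` i.i.d. calibration pairs from `P`, a test pair drawn independently from the tilted
distribution `d𝒫̃ ∝ w(x) dP`, and likelihood-ratio weights, the weighted conformal quantile
covers the test score with probability at least `α`. -/
theorem stmt17 {Ω : Type*} [MeasurableSpace Ω] (μ : Measure Ω) [IsProbabilityMeasure μ]
    (p n : ℕ) (P : Measure ((Fin p → ℝ) × ℝ)) [IsProbabilityMeasure P]
    (w : (Fin p → ℝ) → ℝ) (hwmeas : Measurable w) (hwpos : ∀ x, 0 ≤ w x)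
    (c : ℝ) (hc : 0 < c) (hcint : c = ∫ z, w z.1 ∂P)
    (VS : ((Fin p → ℝ) × ℝ) → ℝ) (hVS : Measurable VS)
    (Z : Fin n → Ω → ((Fin p → ℝ) × ℝ)) (Zt : Ω → ((Fin p → ℝ) × ℝ))
    (hZmeas : ∀ i, Measurable (Z i)) (hZtmeas : Measurable Zt)
    (hindep : iIndepFun (Fin.snoc (α := fun _ => Ω → (Fin p → ℝ) × ℝ) Z Zt) μ)
    (hZlaw : ∀ i, Measure.map (Z i) μ = P)
    (hZtlaw : Measure.map Zt μ =
      (ENNReal.ofReal c)⁻¹ • (P.withDensity fun z => ENNReal.ofReal (w z.1)))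
    (α : ℝ) (hα : α ∈ Set.Ioo (0 : ℝ) 1) :
    ENNReal.ofReal α ≤
      μ {ω | (VS (Zt ω) : EReal) ≤
        equantile
          (Fin.snoc
            (fun i : Fin n => w (Z i ω).1 / (∑ j, w (Z j ω).1 + w (Zt ω).1))
            (w (Zt ω).1 / (∑ j, w (Z j ω).1 + w (Zt ω).1)))
          (Fin.snoc (fun i : Fin n => ((VS (Z i ω) : ℝ) : EReal)) (⊤ : EReal)) α} := by
  classical
  set f : Fin (n + 1) → Ω → ((Fin p → ℝ) × ℝ) := Fin.snoc Z Zt with hf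
  have hfmeas : ∀ i, Measurable (f i) := by
    intro i
    refine Fin.lastCases ?_ ?_ i
    · rw [hf]; simpa [Fin.snoc_last] using hZtmeas
    · intro j; rw [hf]; simpa [Fin.snoc_castSucc] using hZmeas j
  set J : Ω → Fin (n + 1) → ((Fin p → ℝ) × ℝ) := fun ω i => f i ω with hJ
  have hJmeas : Measurable J := measurable_pi_lambda _ hfmeas
  set ρ : ((Fin p → ℝ) × ℝ) → ℝ≥0∞ := fun z => ENNReal.ofReal (w z.1) with hρdef
  have hρ : Measurable ρ := (hwmeas.comp measurable_fst).ennreal_ofReal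
  set Pt : Measure ((Fin p → ℝ) × ℝ) := (ENNReal.ofReal c)⁻¹ • P.withDensity ρ with hPt
  haveI hPtprob : IsProbabilityMeasure Pt := by
    have h := Measure.isProbabilityMeasure_map (μ := μ) hZtmeas.aemeasurable
    rwa [hZtlaw] at h
  set π : Measure (Fin (n + 1) → ((Fin p → ℝ) × ℝ)) := Measure.pi fun _ : Fin (n + 1) => P with hπ
  set νf : Fin (n + 1) → Measure ((Fin p → ℝ) × ℝ) := fun i => if i = Fin.last n then Pt else P with hνf
  haveI hνfprob : ∀ i, IsProbabilityMeasure (νf i) := fun i => by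
    by_cases h : i = Fin.last n
    · simpa only [hνf, if_pos h] using hPtprob
    · simpa only [hνf, if_neg h] using (inferInstance : IsProbabilityMeasure P)
  -- the symmetric quantities
  set qv : (Fin (n + 1) → ((Fin p → ℝ) × ℝ)) → Fin (n + 1) → ℝ :=
    fun x i => w (x i).1 / ∑ j, w (x j).1 with hqv
  set Vv : (Fin (n + 1) → ((Fin p → ℝ) × ℝ)) → Fin (n + 1) → EReal :=
    fun x i => ((VS (x i) : ℝ) : EReal) with hVv
  set Qs : (Fin (n + 1) → ((Fin p → ℝ) × ℝ)) → EReal := fun x => equantile (qv x) (Vv x) α with hQs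
  have hq0 : ∀ x i, 0 ≤ qv x i := fun x i =>
    div_nonneg (hwpos _) (Finset.sum_nonneg fun j _ => hwpos _)
  have hqvmeas : ∀ i, Measurable fun x : Fin (n + 1) → ((Fin p → ℝ) × ℝ) => qv x i := by
    intro i
    exact (hwmeas.comp (measurable_fst.comp (measurable_pi_apply i))).div
      (Finset.measurable_sum _ fun j _ =>
        hwmeas.comp (measurable_fst.comp (measurable_pi_apply j)))
  have hVvmeas : ∀ i, Measurable fun x : Fin (n + 1) → ((Fin p → ℝ) × ℝ) => Vv x i := fun i =>
    measurable_coe_real_ereal.comp (hVS.comp (measurable_pi_apply i))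
  have hQsmeas : Measurable Qs :=
    measurable_equantile α hqvmeas (fun i x => hq0 x i) hVvmeas
  set A : Set (Fin (n + 1) → ((Fin p → ℝ) × ℝ)) := {x | Vv x (Fin.last n) ≤ Qs x} with hA
  have hAm : MeasurableSet A := measurableSet_le (hVvmeas _) hQsmeas
  -- the law of the joint vector
  have hflaw : ∀ i, Measure.map (f i) μ = νf i := by
    intro i
    refine Fin.lastCases ?_ ?_ i
    · have h1 : f (Fin.last n) = Zt := by rw [hf]; exact Fin.snoc_last _ _
      have h2 : νf (Fin.last n) = Pt := if_pos rfl
      rw [h1, h2]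
      exact hZtlaw
    · intro j
      have h1 : f (Fin.castSucc j) = Z j := by rw [hf]; exact Fin.snoc_castSucc _ _ _
      have h2 : νf (Fin.castSucc j) = P := if_neg (Fin.castSucc_lt_last j).ne
      rw [h1, h2]
      exact hZlaw j
  have hJlaw : Measure.map J μ = Measure.pi νf := by
    refine (Measure.pi_eq fun s hs => ?_).symm
    rw [Measure.map_apply hJmeas (MeasurableSet.univ_pi hs)]
    have hpre : J ⁻¹' Set.pi Set.univ s = ⋂ i ∈ Finset.univ, f i ⁻¹' s i := by
      ext ω
      simp [hJ, Set.mem_pi]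
    rw [hpre, hindep.measure_inter_preimage_eq_mul Finset.univ (fun i _ => hs i)]
    refine Finset.prod_congr rfl fun i _ => ?_
    rw [← hflaw i, Measure.map_apply (hfmeas i) (hs i)]
  -- symmetry of the quantile
  have hQsymm : ∀ (σ : Equiv.Perm (Fin (n + 1))) (x : Fin (n + 1) → ((Fin p → ℝ) × ℝ)),
      Qs (x ∘ σ) = Qs x := by
    intro σ x
    have hsum : ∑ j, w ((x ∘ σ) j).1 = ∑ j, w (x j).1 :=
      Equiv.sum_comp σ (fun j => w (x j).1)
    have hqeq : qv (x ∘ σ) = fun i => qv x (σ i) := by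
      funext i
      simp only [hqv, Function.comp_apply]
      rw [Equiv.sum_comp σ (fun j => w (x j).1)]
    have hVeq : Vv (x ∘ σ) = fun i => Vv x (σ i) := rfl
    rw [hQs]
    dsimp only
    rw [hqeq, hVeq, equantile_comp_perm]
  -- pointwise inequality
  have hpoint : ∀ x : Fin (n + 1) → ((Fin p → ℝ) × ℝ),
      ENNReal.ofReal α * ∑ i, ρ (x i) ≤
        ∑ i, (if Vv x i ≤ Qs x then ρ (x i) else 0) := by
    intro x
    set S := ∑ j, w (x j).1 with hSdef
    have hS0 : 0 ≤ S := Finset.sum_nonneg fun j _ => hwpos _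
    have hsum1 : ∑ i, ρ (x i) = ENNReal.ofReal S :=
      (ENNReal.ofReal_sum_of_nonneg fun i _ => hwpos _).symm
    have hsum2 : ∑ i, (if Vv x i ≤ Qs x then ρ (x i) else 0)
        = ENNReal.ofReal (∑ i, if Vv x i ≤ Qs x then w (x i).1 else 0) := by
      rw [ENNReal.ofReal_sum_of_nonneg fun i _ => by split <;> [exact hwpos _; exact le_rfl]]
      refine Finset.sum_congr rfl fun i _ => ?_
      split
      · rfl
      · rw [ENNReal.ofReal_zero]
    have hreal : α * S ≤ ∑ i, if Vv x i ≤ Qs x then w (x i).1 else 0 := by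
      rcases eq_or_lt_of_le hS0 with hS | hS
      · have hzero : ∀ i ∈ Finset.univ, w (x i).1 = 0 :=
          (Finset.sum_eq_zero_iff_of_nonneg fun i _ => hwpos _).1 hS.symm
        have : ∑ i, (if Vv x i ≤ Qs x then w (x i).1 else 0) = 0 := by
          refine Finset.sum_eq_zero fun i _ => ?_
          rw [hzero i (Finset.mem_univ i)]
          split <;> rfl
        rw [this, ← hS, mul_zero]
      · have hq1 : ∑ i, qv x i = 1 := by
          rw [hqv]
          dsimp only
          rw [← Finset.sum_div, div_self hS.ne']
        have h1 : α ≤ ∑ i, if Vv x i ≤ Qs x then qv x i else 0 := by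
          have := equantile_mem (q := qv x) (V := Vv x) (α := α)
            (fun i => hq0 x i) (by rw [hq1]; exact hα.2.le)
          exact this
        have h2 := mul_le_mul_of_nonneg_right h1 hS0
        rw [Finset.sum_mul] at h2
        have h3 : ∑ i, (if Vv x i ≤ Qs x then qv x i else 0) * S
            = ∑ i, if Vv x i ≤ Qs x then w (x i).1 else 0 := by
          refine Finset.sum_congr rfl fun i _ => ?_
          rw [ite_mul, zero_mul]
          congr 1
          rw [hqv]
          dsimp only
          rw [div_mul_cancel₀ _ hS.ne']
        rw [h3] at h2
        exact h2
    calc ENNReal.ofReal α * ∑ i, ρ (x i) = ENNReal.ofReal (α * S) := by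
          rw [hsum1, ENNReal.ofReal_mul hα.1.le]
      _ ≤ ENNReal.ofReal (∑ i, if Vv x i ≤ Qs x then w (x i).1 else 0) :=
          ENNReal.ofReal_le_ofReal hreal
      _ = ∑ i, (if Vv x i ≤ Qs x then ρ (x i) else 0) := hsum2.symm
  -- integrands
  set ind : Fin (n + 1) → (Fin (n + 1) → ((Fin p → ℝ) × ℝ)) → ℝ≥0∞ :=
    fun i x => if Vv x i ≤ Qs x then ρ (x i) else 0 with hind
  have hindmeas : ∀ i, Measurable (ind i) := fun i =>
    Measurable.ite (measurableSet_le (hVvmeas i) hQsmeas)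
      (hρ.comp (measurable_pi_apply i)) measurable_const
  have hρevalmeas : ∀ i : Fin (n + 1),
      Measurable fun x : Fin (n + 1) → ((Fin p → ℝ) × ℝ) => ρ (x i) := fun i =>
    hρ.comp (measurable_pi_apply i)
  -- swap arguments
  have hswap : ∀ i : Fin (n + 1), ∫⁻ x, ind i x ∂π = ∫⁻ x, ind (Fin.last n) x ∂π := by
    intro i
    set σ := Equiv.swap i (Fin.last n) with hσ
    have hcomp : ∀ x : Fin (n + 1) → ((Fin p → ℝ) × ℝ), ind (Fin.last n) (x ∘ σ) = ind i x := by
      intro x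
      have h1 : (x ∘ σ) (Fin.last n) = x i := by
        simp [hσ, Equiv.swap_apply_right]
      rw [hind]
      dsimp only
      rw [hQsymm σ x]
      have h2 : Vv (x ∘ σ) (Fin.last n) = Vv x i := by
        rw [hVv]; dsimp only; rw [h1]
      rw [h2, h1]
    calc ∫⁻ x, ind i x ∂π = ∫⁻ x, ind (Fin.last n) (x ∘ σ) ∂π := by
          refine lintegral_congr fun x => ?_
          rw [hcomp x]
      _ = ∫⁻ x, ind (Fin.last n) x ∂π :=
          lintegral_pi_comp_perm P σ (hindmeas (Fin.last n))
  have hswapρ : ∀ i : Fin (n + 1),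
      ∫⁻ x, ρ (x i) ∂π = ∫⁻ x, ρ (x (Fin.last n)) ∂π := by
    intro i
    set σ := Equiv.swap i (Fin.last n) with hσ
    calc ∫⁻ x, ρ (x i) ∂π = ∫⁻ x, ρ ((x ∘ σ) (Fin.last n)) ∂π := by
          refine lintegral_congr fun x => ?_
          simp [hσ, Equiv.swap_apply_right]
      _ = ∫⁻ x, ρ (x (Fin.last n)) ∂π :=
          lintegral_pi_comp_perm P σ (hρevalmeas (Fin.last n))
  have hc0 : ENNReal.ofReal c ≠ 0 := (ENNReal.ofReal_pos.2 hc).ne'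
  have hcfin : ENNReal.ofReal c ≠ ⊤ := ENNReal.ofReal_ne_top
  -- total mass computation
  have hRlast : ∫⁻ x, ρ (x (Fin.last n)) ∂π = ENNReal.ofReal c := by
    have huniv : Measure.pi νf Set.univ = 1 := measure_univ
    have := pi_tilted_apply P Pt ρ hρ (ENNReal.ofReal c) hPt
      (B := (Set.univ : Set (Fin (n + 1) → (Fin p → ℝ) × ℝ))) MeasurableSet.univ
    rw [hνf] at huniv
    rw [huniv] at this
    rw [Measure.restrict_univ] at this
    have h2 : ENNReal.ofReal c * ((ENNReal.ofReal c)⁻¹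
        * ∫⁻ x, ρ (x (Fin.last n)) ∂(Measure.pi fun _ : Fin (n + 1) => P))
        = ENNReal.ofReal c * 1 := by rw [← this]
    rw [← mul_assoc, ENNReal.mul_inv_cancel hc0 hcfin, one_mul, mul_one] at h2
    rw [hπ]
    exact h2
  -- main integral inequality
  have hTlast : ENNReal.ofReal α * ENNReal.ofReal c ≤ ∫⁻ x, ind (Fin.last n) x ∂π := by
    have hm0 : ((n : ℝ≥0∞) + 1) ≠ 0 := by
      intro h
      exact (one_ne_zero : (1 : ℝ≥0∞) ≠ 0) (add_eq_zero.1 h).2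
    have hmfin : ((n : ℝ≥0∞) + 1) ≠ ⊤ := by
      refine ENNReal.add_ne_top.2 ⟨ENNReal.natCast_ne_top n, ENNReal.one_ne_top⟩
    have hsumT : ∑ _i : Fin (n + 1), ∫⁻ x, ind (Fin.last n) x ∂π
        = ((n : ℝ≥0∞) + 1) * ∫⁻ x, ind (Fin.last n) x ∂π := by
      rw [Finset.sum_const, Finset.card_univ, Fintype.card_fin, nsmul_eq_mul]
      push_cast
      ring
    have hsumR : ∑ _i : Fin (n + 1), ∫⁻ x, ρ (x (Fin.last n)) ∂π
        = ((n : ℝ≥0∞) + 1) * ENNReal.ofReal c := by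
      rw [Finset.sum_const, Finset.card_univ, Fintype.card_fin, nsmul_eq_mul, hRlast]
      push_cast
      ring
    have hchain : ((n : ℝ≥0∞) + 1) * (ENNReal.ofReal α * ENNReal.ofReal c)
        ≤ ((n : ℝ≥0∞) + 1) * ∫⁻ x, ind (Fin.last n) x ∂π := by
      calc ((n : ℝ≥0∞) + 1) * (ENNReal.ofReal α * ENNReal.ofReal c)
          = ENNReal.ofReal α * (((n : ℝ≥0∞) + 1) * ENNReal.ofReal c) := by ring
        _ = ENNReal.ofReal α * ∑ _i : Fin (n + 1), ∫⁻ x, ρ (x (Fin.last n)) ∂π := by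
            rw [hsumR]
        _ = ENNReal.ofReal α * ∑ i : Fin (n + 1), ∫⁻ x, ρ (x i) ∂π := by
            rw [Finset.sum_congr rfl fun i _ => (hswapρ i)]
        _ = ENNReal.ofReal α * ∫⁻ x, ∑ i, ρ (x i) ∂π := by
            rw [lintegral_finset_sum _ fun i _ => hρevalmeas i]
        _ = ∫⁻ x, ENNReal.ofReal α * ∑ i, ρ (x i) ∂π := by
            rw [lintegral_const_mul _ (Finset.measurable_sum _ fun i _ => hρevalmeas i)]
        _ ≤ ∫⁻ x, ∑ i, ind i x ∂π := lintegral_mono fun x => hpoint x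
        _ = ∑ i : Fin (n + 1), ∫⁻ x, ind i x ∂π :=
            lintegral_finset_sum _ fun i _ => hindmeas i
        _ = ∑ _i : Fin (n + 1), ∫⁻ x, ind (Fin.last n) x ∂π :=
            Finset.sum_congr rfl fun i _ => hswap i
        _ = ((n : ℝ≥0∞) + 1) * ∫⁻ x, ind (Fin.last n) x ∂π := hsumT
    exact (ENNReal.mul_le_mul_iff_right hm0 hmfin).1 hchain
  -- inclusion
  have hsub : J ⁻¹' A ⊆ {ω | (VS (Zt ω) : EReal) ≤
      equantile
        (Fin.snoc
          (fun i : Fin n => w (Z i ω).1 / (∑ j, w (Z j ω).1 + w (Zt ω).1))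
          (w (Zt ω).1 / (∑ j, w (Z j ω).1 + w (Zt ω).1)))
        (Fin.snoc (fun i : Fin n => ((VS (Z i ω) : ℝ) : EReal)) (⊤ : EReal)) α} := by
    intro ω hω
    simp only [Set.mem_preimage, hA, Set.mem_setOf_eq] at hω
    have hD : (∑ j, w (Z j ω).1) + w (Zt ω).1 = ∑ j, w (J ω j).1 := by
      rw [Fin.sum_univ_castSucc]
      congr 1
      · refine Finset.sum_congr rfl fun j _ => ?_
        simp [hJ, hf, Fin.snoc_castSucc]
      · simp [hJ, hf, Fin.snoc_last]
    have hweq : Fin.snoc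
        (fun i : Fin n => w (Z i ω).1 / (∑ j, w (Z j ω).1 + w (Zt ω).1))
        (w (Zt ω).1 / (∑ j, w (Z j ω).1 + w (Zt ω).1)) = qv (J ω) := by
      funext i
      refine Fin.lastCases ?_ ?_ i
      · rw [Fin.snoc_last, hqv]
        dsimp only
        rw [← hD]
        congr 1
        simp [hJ, hf, Fin.snoc_last]
      · intro j
        rw [Fin.snoc_castSucc, hqv]
        dsimp only
        rw [← hD]
        congr 1
        simp [hJ, hf, Fin.snoc_castSucc]
    have hVle : ∀ i, Vv (J ω) i ≤
        Fin.snoc (α := fun _ : Fin (n + 1) => EReal)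
          (fun i : Fin n => ((VS (Z i ω) : ℝ) : EReal)) (⊤ : EReal) i := by
      intro i
      refine Fin.lastCases ?_ ?_ i
      · rw [Fin.snoc_last]; exact le_top
      · intro j
        rw [Fin.snoc_castSucc, hVv]
        dsimp only
        have : J ω (Fin.castSucc j) = Z j ω := by simp [hJ, hf, Fin.snoc_castSucc]
        rw [this]
    have hVlast : (VS (Zt ω) : EReal) = Vv (J ω) (Fin.last n) := by
      rw [hVv]
      dsimp only
      congr 2
      simp [hJ, hf, Fin.snoc_last]
    show (VS (Zt ω) : EReal) ≤ _
    rw [hweq, hVlast]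
    exact le_trans hω (equantile_mono (fun i => hq0 (J ω) i) hVle)
  -- put everything together
  have hμA : μ (J ⁻¹' A) = Measure.pi νf A := by
    rw [← hJlaw, Measure.map_apply hJmeas hAm]
  have hνA : Measure.pi νf A
      = (ENNReal.ofReal c)⁻¹ * ∫⁻ x in A, ρ (x (Fin.last n)) ∂π := by
    rw [hνf, hπ]
    exact pi_tilted_apply P Pt ρ hρ (ENNReal.ofReal c) hPt hAm
  have hindic : ∫⁻ x in A, ρ (x (Fin.last n)) ∂π = ∫⁻ x, ind (Fin.last n) x ∂π := by
    rw [← lintegral_indicator hAm]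
    refine lintegral_congr fun x => ?_
    rw [Set.indicator_apply, hind]
    dsimp only
    congr 1
  calc ENNReal.ofReal α
      = (ENNReal.ofReal c)⁻¹ * (ENNReal.ofReal α * ENNReal.ofReal c) := by
        rw [mul_comm (ENNReal.ofReal α), ← mul_assoc,
          ENNReal.inv_mul_cancel hc0 hcfin, one_mul]
    _ ≤ (ENNReal.ofReal c)⁻¹ * ∫⁻ x, ind (Fin.last n) x ∂π :=
        mul_le_mul_right hTlast _
    _ = Measure.pi νf A := by rw [hνA, hindic]
    _ = μ (J ⁻¹' A) := hμA.symm
    _ ≤ μ {ω | (VS (Zt ω) : EReal) ≤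
        equantile
          (Fin.snoc
            (fun i : Fin n => w (Z i ω).1 / (∑ j, w (Z j ω).1 + w (Zt ω).1))
            (w (Zt ω).1 / (∑ j, w (Z j ω).1 + w (Zt ω).1)))
          (Fin.snoc (fun i : Fin n => ((VS (Z i ω) : ℝ) : EReal)) (⊤ : EReal)) α} :=
        measure_mono hsub
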